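/- arXiv:2407.01835 — 2 statements merged into one kernel-verified Lean document; each statement's English description precedes it below -/
import Mathlib

section
/- Let p be a prime. Then every subset A of F_p \ {0} of size at most log p / log log p has a valid ordering, i.e., an ordering a_1,...,a_{|A|} of its elements such that the partial sums a_1, a_1+a_2, ..., a_1+...+a_{|A|} are pairwise distinct in F_p. -/
/-- The partial sums a₁, a₁+a₂, ..., a₁+⋯+aₙ of the list are pairwise distinct. -/
def ValidOrdering {G : Type*} [AddCommGroup G] (l : List G) : Prop :=
  ((List.range l.length).map (fun i => (l.take (i + 1)).sum)).Nodup

/-- `l` is an ordering (an enumeration without repetition) of the finite set `A`. -/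
def IsOrderingOf {G : Type*} [AddCommGroup G] (l : List G) (A : Finset G) : Prop :=
  l.Nodup ∧ ∀ a, a ∈ l ↔ a ∈ A

namespace GrahamAux

variable {G : Type*} [AddCommGroup G]

def psl : List G → List G
  | [] => []
  | a :: t => a :: (psl t).map (a + ·)

@[simp] lemma psl_nil : psl ([] : List G) = [] := rfl
@[simp] lemma psl_cons (a : G) (t : List G) : psl (a :: t) = a :: (psl t).map (a + ·) := rfl

lemma psl_eq_range_map (l : List G) :
    (List.range l.length).map (fun i => (l.take (i + 1)).sum) = psl l := by
  induction l with
  | nil => simp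
  | cons a t ih =>
    rw [psl_cons, ← ih, List.map_map, List.length_cons, List.range_succ_eq_map,
      List.map_cons, List.map_map]
    simp [Function.comp, List.take_succ_cons]

lemma psl_map {H : Type*} [AddCommGroup H] (f : G → H) (hf : ∀ x y, f (x + y) = f x + f y)
    (l : List G) : psl (l.map f) = (psl l).map f := by
  induction l with
  | nil => simp
  | cons a t ih =>
    simp only [List.map_cons, psl_cons, ih, List.map_map]
    congr 1
    ext s
    simp [Function.comp, hf]

lemma psl_append_singleton (u : List G) (a : G) :
    psl (u ++ [a]) = psl u ++ [u.sum + a] := by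
  induction u with
  | nil => simp
  | cons b u ih =>
    simp only [List.cons_append, psl_cons, ih, List.map_append, List.map_cons, List.sum_cons,
      List.map_nil]
    simp [add_assoc]

lemma psl_reverse (l : List G) :
    psl l.reverse = ((List.range l.length).map (fun i => l.sum - (l.take i).sum)).reverse := by
  induction l with
  | nil => simp
  | cons a t ih =>
    rw [List.reverse_cons, psl_append_singleton, ih, List.length_cons,
      List.range_succ_eq_map, List.map_cons, List.map_map, List.reverse_cons]
    have h1 : ((fun i => (a :: t).sum - ((a :: t).take i).sum) ∘ Nat.succ)
        = (fun i => t.sum - (t.take i).sum) := by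
      funext i
      simp only [Function.comp, List.take_succ_cons, List.sum_cons]
      abel
    rw [h1]
    congr 1
    simp [List.sum_reverse, add_comm]

lemma take_sum_mem_psl (l : List G) {m : ℕ} (hm : m < l.length) :
    (l.take (m + 1)).sum ∈ psl l := by
  rw [← psl_eq_range_map]
  exact List.mem_map.2 ⟨m, List.mem_range.2 hm, rfl⟩

lemma mem_psl {l : List G} {s : G} (hs : s ∈ psl l) :
    ∃ i, i < l.length ∧ s = (l.take (i + 1)).sum := by
  rw [← psl_eq_range_map] at hs
  simp only [List.mem_map, List.mem_range] at hs
  obtain ⟨i, hi, rfl⟩ := hs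
  exact ⟨i, hi, rfl⟩

lemma takeinj {l : List G} (hnd : (psl l).Nodup) (h0 : ∀ s ∈ psl l, s ≠ 0)
    {i j : ℕ} (hi : i ≤ l.length) (hj : j ≤ l.length)
    (hij : (l.take i).sum = (l.take j).sum) : i = j := by
  have hinj := List.inj_on_of_nodup_map (f := fun i => (l.take (i + 1)).sum)
      (l := List.range l.length) (by rwa [psl_eq_range_map])
  match i, j with
  | 0, 0 => rfl
  | 0, (j+1) =>
    exact absurd (by simpa using hij.symm) (h0 _ (take_sum_mem_psl l (by omega)))
  | (i+1), 0 =>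
    exact absurd (by simpa using hij) (h0 _ (take_sum_mem_psl l (by omega)))
  | (i+1), (j+1) =>
    have := hinj (List.mem_range.2 (by omega : i < l.length))
      (List.mem_range.2 (by omega : j < l.length)) hij
    omega

lemma list_sum_eq {l : List ℤ} {S : Finset ℤ} (hnd : l.Nodup) (hmem : ∀ a, a ∈ l ↔ a ∈ S) :
    l.sum = ∑ x ∈ S, x := by
  have hts : l.toFinset = S := by ext a; rw [List.mem_toFinset]; exact hmem a
  rw [← hts, List.sum_toFinset _ hnd]
  simp

lemma claimE : ∀ (n : ℕ) (S : Finset ℤ), S.card = n → (0:ℤ) ∉ S → 0 < ∑ x ∈ S, x →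
    ∃ l : List ℤ, l.Nodup ∧ (∀ a, a ∈ l ↔ a ∈ S) ∧ (psl l).Nodup ∧ (∀ s ∈ psl l, 0 < s) := by
  intro n
  induction n using Nat.strong_induction_on with
  | _ n IH =>
  intro S hcard h0 hT
  have hSne : S.Nonempty := Finset.nonempty_of_sum_ne_zero (ne_of_gt hT)
  have hnpos : 0 < n := by rw [← hcard]; exact Finset.card_pos.2 hSne
  set T := ∑ x ∈ S, x with hTdef
  by_cases hb : ∃ b ∈ S, 0 < b ∧ b ≠ T
  · obtain ⟨b, hbS, hbpos, hbT⟩ := hb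
    have hn1 : (S.erase b).card = n - 1 := by rw [Finset.card_erase_of_mem hbS, hcard]
    have hT' : ∑ x ∈ S.erase b, x = T - b := Finset.sum_erase_eq_sub hbS
    have h0' : (0:ℤ) ∉ S.erase b := fun h => h0 (Finset.mem_of_mem_erase h)
    -- common final step, abstracted over l' with: ordering of erase, psl nodup,
    -- psl values s satisfy T - b ≤ s and s ≠ 0
    have final : ∀ l' : List ℤ, l'.Nodup → (∀ a, a ∈ l' ↔ a ∈ S.erase b) →
        (psl l').Nodup → (∀ s ∈ psl l', 0 < b + s ∧ s ≠ 0) →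
        ∃ l : List ℤ, l.Nodup ∧ (∀ a, a ∈ l ↔ a ∈ S) ∧ (psl l).Nodup ∧
          (∀ s ∈ psl l, 0 < s) := by
      intro l' hnd' hmem' hpnd' hpval'
      refine ⟨b :: l', ?_, ?_, ?_, ?_⟩
      · exact List.nodup_cons.2
          ⟨fun h => (Finset.notMem_erase b S) ((hmem' b).1 h), hnd'⟩
      · intro a
        simp only [List.mem_cons, hmem' a, Finset.mem_erase]
        constructor
        · rintro (rfl | ⟨_, h⟩)
          · exact hbS
          · exact h
        · intro haS
          by_cases hab : a = b
          · exact Or.inl hab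
          · exact Or.inr ⟨hab, haS⟩
      · rw [psl_cons]
        refine List.nodup_cons.2 ⟨?_, hpnd'.map (add_right_injective b)⟩
        intro hmm
        obtain ⟨s, hs, hbs⟩ := List.mem_map.1 hmm
        exact (hpval' s hs).2 (by linarith [hbs])
      · rw [psl_cons]
        intro s hs
        rcases List.mem_cons.1 hs with rfl | hs
        · exact hbpos
        · obtain ⟨t, ht, rfl⟩ := List.mem_map.1 hs
          exact (hpval' t ht).1
    rcases lt_trichotomy 0 (T - b) with hpos | hzero | hneg
    · obtain ⟨l', hnd', hmem', hpnd', hppos'⟩ := IH (n-1) (by omega) (S.erase b) hn1 h0'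
        (by rw [hT']; exact hpos)
      exact final l' hnd' hmem' hpnd'
        (fun s hs => ⟨by have := hppos' s hs; linarith, ne_of_gt (hppos' s hs)⟩)
    · exact absurd (by linarith : b = T) hbT
    · -- reversal case
      set S2 := (S.erase b).image (fun x => -x) with hS2
      have hcard2 : S2.card = n - 1 := by
        rw [hS2, Finset.card_image_of_injective _ neg_injective, hn1]
      have h02 : (0:ℤ) ∉ S2 := by
        rw [hS2]
        intro h
        obtain ⟨y, hy, hy0⟩ := Finset.mem_image.1 h
        exact h0' (by rwa [show y = 0 by linarith] at hy)
      have hsum2 : ∑ x ∈ S2, x = b - T := by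
        rw [hS2, Finset.sum_image (fun x _ y _ h => neg_injective h)]
        rw [Finset.sum_neg_distrib, hT']
        ring
      obtain ⟨u, hndu, hmemu, hpndu, hpposu⟩ := IH (n-1) (by omega) S2 hcard2 h02
        (by rw [hsum2]; linarith)
      set v := u.map (fun x => -x) with hv
      have hndv : v.Nodup := hndu.map neg_injective
      have hpslv : psl v = (psl u).map (fun x => -x) :=
        psl_map _ (fun x y => by ring) u
      have hvmem : ∀ a, a ∈ v ↔ a ∈ S.erase b := by
        intro a
        rw [hv]
        simp only [List.mem_map]
        constructor
        · rintro ⟨x, hx, rfl⟩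
          have := (hmemu x).1 hx
          rw [hS2] at this
          obtain ⟨y, hy, rfl⟩ := Finset.mem_image.1 this
          simpa using hy
        · intro ha
          exact ⟨-a, (hmemu (-a)).2 (by rw [hS2]; exact Finset.mem_image.2 ⟨a, ha, rfl⟩),
            neg_neg a⟩
      have hvsum : v.sum = T - b := by rw [list_sum_eq hndv hvmem, hT']
      have hvneg : ∀ s ∈ psl v, s < 0 := by
        intro s hs
        rw [hpslv] at hs
        obtain ⟨t, ht, rfl⟩ := List.mem_map.1 hs
        have := hpposu t ht
        linarith
      have hvnd : (psl v).Nodup := by rw [hpslv]; exact hpndu.map neg_injective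
      have htake : ∀ i, i ≤ v.length → (v.take i).sum ≤ 0 := by
        intro i hi
        match i with
        | 0 => simp
        | (m+1) => exact le_of_lt (hvneg _ (take_sum_mem_psl v (by omega)))
      have hpsl' := psl_reverse v
      have hpnd' : (psl v.reverse).Nodup := by
        rw [hpsl', List.nodup_reverse]
        refine List.Nodup.map_on ?_ List.nodup_range
        intro i hi j hj hij
        exact takeinj hvnd (fun s hs => ne_of_lt (hvneg s hs))
          (le_of_lt (List.mem_range.1 hi)) (le_of_lt (List.mem_range.1 hj)) (by linarith)
      have hpval' : ∀ s ∈ psl v.reverse, 0 < b + s ∧ s ≠ 0 := by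
        intro s hs
        rw [hpsl', List.mem_reverse] at hs
        obtain ⟨i, hi, rfl⟩ := List.mem_map.1 hs
        have hi' := List.mem_range.1 hi
        constructor
        · have h2 := htake i (le_of_lt hi')
          have h3 : T - b ≤ v.sum - (v.take i).sum := by rw [hvsum]; linarith
          linarith
        · intro h
          have heq : (v.take i).sum = (v.take v.length).sum := by
            rw [List.take_length]
            linarith
          have := takeinj hvnd (fun s hs => ne_of_lt (hvneg s hs))
            (le_of_lt hi') le_rfl heq
          omega
      exact final v.reverse (List.nodup_reverse.2 hndv)
        (fun a => (List.mem_reverse).trans (hvmem a)) hpnd' hpval'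
  · push_neg at hb
    have hTS : T ∈ S := by
      by_contra hTS
      have hneg : ∀ x ∈ S, x < 0 := by
        intro x hx
        rcases lt_trichotomy x 0 with h | h | h
        · exact h
        · exact absurd (h ▸ hx) h0
        · exact absurd ((hb x hx h) ▸ hx) hTS
      have : T < 0 := by
        have := Finset.sum_lt_sum_of_nonempty hSne hneg
        simpa [hTdef] using this
      linarith
    have hS1 : S = {T} := by
      by_contra hne
      have : ¬ ∀ x ∈ S, x = T := fun h =>
        hne (Finset.eq_singleton_iff_unique_mem.2 ⟨hTS, h⟩)
      push_neg at this
      obtain ⟨x, hxS, hxT⟩ := this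
      have hEne : (S.erase T).Nonempty := ⟨x, Finset.mem_erase.2 ⟨hxT, hxS⟩⟩
      have hneg : ∀ y ∈ S.erase T, y < 0 := by
        intro y hy
        obtain ⟨hyT, hyS⟩ := Finset.mem_erase.1 hy
        rcases lt_trichotomy y 0 with h | h | h
        · exact h
        · exact absurd (h ▸ hyS) h0
        · exact absurd (hb y hyS h) hyT
      have h1 := Finset.sum_lt_sum_of_nonempty hEne hneg
      rw [Finset.sum_erase_eq_sub hTS] at h1
      simp [hTdef] at h1
    refine ⟨[T], by simp, ?_, by simp, ?_⟩
    · intro a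
      simp [hS1]
    · intro s hs
      simp only [psl_cons, psl_nil, List.map_nil, List.mem_singleton] at hs
      rw [hs]
      exact hT

lemma lemmaR (S : Finset ℤ) (h0 : (0:ℤ) ∉ S) :
    ∃ l : List ℤ, l.Nodup ∧ (∀ a, a ∈ l ↔ a ∈ S) ∧ (psl l).Nodup := by
  rcases lt_trichotomy 0 (∑ x ∈ S, x) with hpos | hzero | hneg
  · obtain ⟨l, h1, h2, h3, _⟩ := claimE S.card S rfl h0 hpos
    exact ⟨l, h1, h2, h3⟩
  · rcases S.eq_empty_or_nonempty with rfl | hne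
    · exact ⟨[], by simp, by simp, by simp⟩
    · have ha : ∃ a ∈ S, a < 0 := by
        by_contra h
        push_neg at h
        have hpos : ∀ x ∈ S, 0 < x := by
          intro x hx
          rcases lt_trichotomy x 0 with h' | h' | h'
          · exact absurd h' (not_lt.2 (h x hx))
          · exact absurd (h' ▸ hx) h0
          · exact h'
        have := Finset.sum_lt_sum_of_nonempty hne hpos
        simp at this
        omega
      obtain ⟨a, haS, haneg⟩ := ha
      have h0' : (0:ℤ) ∉ S.erase a := fun h => h0 (Finset.mem_of_mem_erase h)
      have hsum' : 0 < ∑ x ∈ S.erase a, x := by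
        rw [Finset.sum_erase_eq_sub haS, ← hzero]
        linarith
      obtain ⟨l', h1, h2, h3, h4⟩ := claimE _ (S.erase a) rfl h0' hsum'
      refine ⟨a :: l', ?_, ?_, ?_⟩
      · exact List.nodup_cons.2 ⟨fun h => (Finset.notMem_erase a S) ((h2 a).1 h), h1⟩
      · intro x
        simp only [List.mem_cons, h2 x, Finset.mem_erase]
        constructor
        · rintro (rfl | ⟨_, h⟩)
          · exact haS
          · exact h
        · intro hxS
          by_cases hxa : x = a
          · exact Or.inl hxa
          · exact Or.inr ⟨hxa, hxS⟩
      · rw [psl_cons]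
        refine List.nodup_cons.2 ⟨?_, h3.map (add_right_injective a)⟩
        intro hmm
        obtain ⟨s, hs, has⟩ := List.mem_map.1 hmm
        have : s = 0 := by linarith [has]
        exact absurd (this ▸ h4 s hs) (lt_irrefl 0)
  · set S2 := S.image (fun x => -x) with hS2
    have h02 : (0:ℤ) ∉ S2 := by
      rw [hS2]
      intro h
      obtain ⟨y, hy, hy0⟩ := Finset.mem_image.1 h
      exact h0 (by rwa [show y = 0 by linarith] at hy)
    have hsum2 : 0 < ∑ x ∈ S2, x := by
      rw [hS2, Finset.sum_image (fun x _ y _ h => neg_injective h), Finset.sum_neg_distrib]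
      linarith
    obtain ⟨u, h1, h2, h3, _⟩ := claimE _ S2 rfl h02 hsum2
    refine ⟨u.map (fun x => -x), h1.map neg_injective, ?_, ?_⟩
    · intro a
      simp only [List.mem_map]
      constructor
      · rintro ⟨x, hx, rfl⟩
        have := (h2 x).1 hx
        rw [hS2] at this
        obtain ⟨y, hy, rfl⟩ := Finset.mem_image.1 this
        simpa using hy
      · intro ha
        exact ⟨-a, (h2 (-a)).2 (by rw [hS2]; exact Finset.mem_image.2 ⟨a, ha, rfl⟩), neg_neg a⟩
    · rw [psl_map _ (fun x y => by ring)]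
      exact h3.map neg_injective

lemma validOrdering_iff (l : List G) : ValidOrdering l ↔ (psl l).Nodup := by
  rw [ValidOrdering, psl_eq_range_map]

lemma valid1 (x : G) : ValidOrdering [x] := by
  rw [validOrdering_iff]; simp

lemma valid2 (x y : G) (hy : y ≠ 0) : ValidOrdering [x, y] := by
  rw [validOrdering_iff]
  have h1 : x ≠ x + y := fun h => hy (left_eq_add.1 h)
  simp [h1]

lemma valid3 (x y z : G) (hy : y ≠ 0) (hz : z ≠ 0) (hyz : y + z ≠ 0) :
    ValidOrdering [x, y, z] := by
  rw [validOrdering_iff]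
  have h1 : x ≠ x + y := fun h => hy (left_eq_add.1 h)
  have h2 : x ≠ x + (y + z) := fun h => hyz (left_eq_add.1 h)
  have h3 : x + y ≠ x + (y + z) := fun h => hz (left_eq_add.1 (add_left_cancel h))
  simp [h1, h2, h3]

lemma valid4 (x y z w : G) (hy : y ≠ 0) (hz : z ≠ 0) (hw : w ≠ 0)
    (hyz : y + z ≠ 0) (hzw : z + w ≠ 0) (hyzw : y + (z + w) ≠ 0) :
    ValidOrdering [x, y, z, w] := by
  rw [validOrdering_iff]
  have h1 : x ≠ x + y := fun h => hy (left_eq_add.1 h)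
  have h2 : x ≠ x + (y + z) := fun h => hyz (left_eq_add.1 h)
  have h3 : x ≠ x + (y + (z + w)) := fun h => hyzw (left_eq_add.1 h)
  have h4 : x + y ≠ x + (y + z) := fun h => hz (left_eq_add.1 (add_left_cancel h))
  have h5 : x + y ≠ x + (y + (z + w)) :=
    fun h => hzw (left_eq_add.1 (add_left_cancel h))
  have h6 : x + (y + z) ≠ x + (y + (z + w)) := by
    intro h
    exact hw (left_eq_add.1 (add_left_cancel (add_left_cancel h)))
  simp [h1, h2, h3, h4, h5, h6]

lemma triple_arrange (u t v : G) (hut : u ≠ t) (huv : u ≠ v) (htv : t ≠ v) :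
    ∃ p q r : G, p + q ≠ 0 ∧ q + r ≠ 0 ∧ p + (q + r) = u + (t + v) ∧
      (∀ a : G, (a = p ∨ a = q ∨ a = r) ↔ (a = u ∨ a = t ∨ a = v)) ∧
      p ≠ q ∧ p ≠ r ∧ q ≠ r := by
  by_cases h1 : u + t = 0
  · refine ⟨u, v, t, ?_, ?_, by abel, fun a => by tauto, huv, hut, Ne.symm htv⟩
    · intro h
      exact htv ((eq_neg_of_add_eq_zero_right h1).trans
        (eq_neg_of_add_eq_zero_right h).symm)
    · intro h
      exact huv ((eq_neg_of_add_eq_zero_left h1).trans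
        (eq_neg_of_add_eq_zero_left h).symm)
  · by_cases h2 : t + v = 0
    · refine ⟨t, u, v, fun h => h1 (by rwa [add_comm] at h), ?_, by abel,
        fun a => by tauto, Ne.symm hut, htv, huv⟩
      intro h
      exact hut ((eq_neg_of_add_eq_zero_left h).trans
        (eq_neg_of_add_eq_zero_left h2).symm).symm.symm
    · exact ⟨u, t, v, h1, h2, rfl, fun a => Iff.rfl, hut, huv, htv⟩

lemma small_case [DecidableEq G] (A : Finset G) (h0 : (0:G) ∉ A) (h4 : A.card ≤ 4) :
    ∃ l : List G, IsOrderingOf l A ∧ ValidOrdering l := by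
  have hne : ∀ x ∈ A, x ≠ 0 := fun x hx h => h0 (h ▸ hx)
  interval_cases hc : A.card
  · refine ⟨[], ⟨by simp, ?_⟩, by rw [validOrdering_iff]; simp⟩
    intro a
    simp [Finset.card_eq_zero.1 hc]
  · obtain ⟨a, rfl⟩ := Finset.card_eq_one.1 hc
    exact ⟨[a], ⟨by simp, fun x => by simp⟩, valid1 a⟩
  · obtain ⟨a, b, hab, rfl⟩ := Finset.card_eq_two.1 hc
    refine ⟨[a, b], ⟨by simp [hab], fun x => by simp⟩,
      valid2 a b (hne b (by simp))⟩
  · obtain ⟨a, b, c, hab, hac, hbc, rfl⟩ := Finset.card_eq_three.1 hc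
    have ha0 := hne a (by simp)
    have hb0 := hne b (by simp)
    have hc0 := hne c (by simp)
    by_cases hbc0 : b + c = 0
    · have hac0 : a + c ≠ 0 := by
        intro h
        exact hab ((eq_neg_of_add_eq_zero_left h).trans
          (eq_neg_of_add_eq_zero_left hbc0).symm)
      refine ⟨[b, a, c], ⟨by simp [hab.symm, hbc, hac], fun x => by simp; tauto⟩,
        valid3 b a c ha0 hc0 hac0⟩
    · exact ⟨[a, b, c], ⟨by simp [hab, hac, hbc], fun x => by simp⟩,
        valid3 a b c hb0 hc0 hbc0⟩
  · obtain ⟨d, t, hdt, rfl, ht3⟩ := Finset.card_eq_succ.1 hc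
    obtain ⟨a, b, c, hab, hac, hbc, rfl⟩ := Finset.card_eq_three.1 ht3
    have hda : d ≠ a := fun h => hdt (by simp [h])
    have hdb : d ≠ b := fun h => hdt (by simp [h])
    have hdc : d ≠ c := fun h => hdt (by simp [h])
    have ha0 := hne a (by simp)
    have hb0 := hne b (by simp)
    have hc0 := hne c (by simp)
    have hd0 := hne d (by simp)
    by_cases hs : a + (b + c) = 0
    · -- use triple (d, b, c) with first element a
      have hsum : d + (b + c) ≠ 0 := by
        intro h
        exact hda (add_right_cancel (h.trans hs.symm))
      obtain ⟨p, q, r, hpq, hqr, hsumeq, hiff, hpq', hpr', hqr'⟩ :=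
        triple_arrange d b c hdb hdc hbc
      have hmem : ∀ x : G, (x = p ∨ x = q ∨ x = r) ↔ (x = d ∨ x = b ∨ x = c) := hiff
      have hp0 : p ≠ 0 := by
        rcases (hmem p).1 (Or.inl rfl) with rfl | rfl | rfl <;> assumption
      have hq0 : q ≠ 0 := by
        rcases (hmem q).1 (Or.inr (Or.inl rfl)) with rfl | rfl | rfl <;> assumption
      have hr0 : r ≠ 0 := by
        rcases (hmem r).1 (Or.inr (Or.inr rfl)) with rfl | rfl | rfl <;> assumption
      have hap : a ≠ p := by
        rcases (hmem p).1 (Or.inl rfl) with rfl | rfl | rfl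
        exacts [Ne.symm hda, hab, hac]
      have haq : a ≠ q := by
        rcases (hmem q).1 (Or.inr (Or.inl rfl)) with rfl | rfl | rfl
        exacts [Ne.symm hda, hab, hac]
      have har : a ≠ r := by
        rcases (hmem r).1 (Or.inr (Or.inr rfl)) with rfl | rfl | rfl
        exacts [Ne.symm hda, hab, hac]
      refine ⟨[a, p, q, r], ⟨by simp [hap, haq, har, hpq', hpr', hqr'], ?_⟩,
        valid4 a p q r hp0 hq0 hr0 hpq hqr (hsumeq ▸ hsum)⟩
      intro x
      simp only [List.mem_cons, List.not_mem_nil, or_false, Finset.mem_insert,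
        Finset.mem_singleton]
      constructor
      · rintro (h | h)
        · exact Or.inr (Or.inl h)
        · rcases (hmem x).1 h with h' | h' | h'
          exacts [Or.inl h', Or.inr (Or.inr (Or.inl h')), Or.inr (Or.inr (Or.inr h'))]
      · rintro (h | h | h | h)
        exacts [Or.inr ((hmem x).2 (Or.inl h)), Or.inl h,
          Or.inr ((hmem x).2 (Or.inr (Or.inl h))), Or.inr ((hmem x).2 (Or.inr (Or.inr h)))]
    · obtain ⟨p, q, r, hpq, hqr, hsumeq, hiff, hpq', hpr', hqr'⟩ :=
        triple_arrange a b c hab hac hbc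
      have hmem : ∀ x : G, (x = p ∨ x = q ∨ x = r) ↔ (x = a ∨ x = b ∨ x = c) := hiff
      have hp0 : p ≠ 0 := by
        rcases (hmem p).1 (Or.inl rfl) with rfl | rfl | rfl <;> assumption
      have hq0 : q ≠ 0 := by
        rcases (hmem q).1 (Or.inr (Or.inl rfl)) with rfl | rfl | rfl <;> assumption
      have hr0 : r ≠ 0 := by
        rcases (hmem r).1 (Or.inr (Or.inr rfl)) with rfl | rfl | rfl <;> assumption
      have hdp : d ≠ p := by
        rcases (hmem p).1 (Or.inl rfl) with rfl | rfl | rfl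
        exacts [hda, hdb, hdc]
      have hdq : d ≠ q := by
        rcases (hmem q).1 (Or.inr (Or.inl rfl)) with rfl | rfl | rfl
        exacts [hda, hdb, hdc]
      have hdr : d ≠ r := by
        rcases (hmem r).1 (Or.inr (Or.inr rfl)) with rfl | rfl | rfl
        exacts [hda, hdb, hdc]
      refine ⟨[d, p, q, r], ⟨by simp [hdp, hdq, hdr, hpq', hpr', hqr'], ?_⟩,
        valid4 d p q r hp0 hq0 hr0 hpq hqr (hsumeq ▸ hs)⟩
      intro x
      simp only [List.mem_cons, List.not_mem_nil, or_false, Finset.mem_insert,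
        Finset.mem_singleton]
      constructor
      · rintro (h | h)
        · exact Or.inl h
        · exact Or.inr ((hmem x).1 h)
      · rintro (h | h)
        · exact Or.inl h
        · exact Or.inr ((hmem x).2 h)

lemma prime_mid (q : ℕ) (hq : q.Prime) (h6 : 6 ≤ q) (h17 : q < 17) :
    q = 7 ∨ q = 11 ∨ q = 13 := by
  interval_cases q
  all_goals first | decide | exact absurd hq (by decide)

lemma abs_list_sum_le (u : List ℤ) : |u.sum| ≤ (u.map (fun x => |x|)).sum := by
  induction u with
  | nil => simp
  | cons a t ih =>
    simp only [List.sum_cons, List.map_cons]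
    calc |a + t.sum| ≤ |a| + |t.sum| := abs_add_le _ _
    _ ≤ |a| + (t.map (fun x => |x|)).sum := by linarith

lemma sublist_abs_sum_le {u w : List ℤ} (h : u.Sublist w) :
    (u.map (fun x => |x|)).sum ≤ (w.map (fun x => |x|)).sum := by
  induction h with
  | slnil => simp
  | cons a _ ih =>
    simp only [List.map_cons, List.sum_cons]
    linarith [abs_nonneg a]
  | cons_cons a _ ih =>
    simp only [List.map_cons, List.sum_cons]
    linarith

lemma psl_diff_bound {L : List ℤ} {x y : ℤ} (hx : x ∈ psl L) (hy : y ∈ psl L) :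
    |x - y| ≤ (L.map (fun t => |t|)).sum := by
  obtain ⟨i, hi, rfl⟩ := mem_psl hx
  obtain ⟨j, hj, rfl⟩ := mem_psl hy
  suffices h : ∀ i j : ℕ, i ≤ j → j < L.length →
      |(L.take (j+1)).sum - (L.take (i+1)).sum| ≤ (L.map (fun t => |t|)).sum by
    rcases le_total i j with hij | hij
    · rw [abs_sub_comm]; exact h i j hij hj
    · exact h j i hij hi
  intro i j hij hj
  have hdec := List.take_append_drop (i+1) (L.take (j+1))
  have hsum := congrArg List.sum hdec
  rw [List.sum_append, List.take_take, Nat.min_eq_left (by omega)] at hsum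
  have heq : (L.take (j+1)).sum - (L.take (i+1)).sum = ((L.take (j+1)).drop (i+1)).sum := by
    linarith
  rw [heq]
  calc |((L.take (j+1)).drop (i+1)).sum|
      ≤ (((L.take (j+1)).drop (i+1)).map (fun t => |t|)).sum := abs_list_sum_le _
  _ ≤ (L.map (fun t => |t|)).sum :=
      sublist_abs_sum_le ((List.drop_sublist _ _).trans (List.take_sublist _ _))
lemma rectify (p : ℕ) (hp : p.Prime) (A : Finset (ZMod p)) (h0 : (0 : ZMod p) ∉ A)
    (k : ℕ) (hk : A.card = k) (hk2 : 2 ≤ k) (hkk : k ^ k < p) :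
    ∃ (c : ZMod p) (d : ZMod p → ℤ), c ≠ 0 ∧
      (∀ a ∈ A, ((d a : ℤ) : ZMod p) = c * a) ∧
      (∀ a ∈ A, d a ≠ 0) ∧
      (∀ a ∈ A, ∀ b ∈ A, d a = d b → a = b) ∧
      (∀ a ∈ A, (k : ℤ) * |d a| ≤ (p : ℤ) - 1) := by
  haveI : Fact p.Prime := ⟨hp⟩
  have hppos : 0 < p := hp.pos
  have hbox : ∀ (t : ℕ) (a : ZMod p), ((t : ZMod p) * a).val * k / p < k := by
    intro t a
    have hval : ((t : ZMod p) * a).val < p := ZMod.val_lt _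
    rw [Nat.div_lt_iff_lt_mul hppos]
    calc ((t : ZMod p) * a).val * k < p * k :=
          Nat.mul_lt_mul_of_lt_of_le hval le_rfl (by omega)
    _ = k * p := Nat.mul_comm _ _
  set φ : ℕ → (A → Fin k) := fun t x => ⟨((t : ZMod p) * x.1).val * k / p, hbox t x.1⟩
    with hφ
  have hcards : (Finset.univ : Finset (A → Fin k)).card < (Finset.range (k ^ k + 1)).card := by
    rw [Finset.card_range, Finset.card_univ, Fintype.card_fun, Fintype.card_coe, hk,
      Fintype.card_fin]
    omega
  obtain ⟨t1, ht1, t2, ht2, htne, hteq⟩ :=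
    Finset.exists_ne_map_eq_of_card_lt_of_maps_to hcards (fun t _ => Finset.mem_univ (φ t))
  -- wlog t2 < t1
  wlog hlt : t2 < t1 generalizing t1 t2
  · exact this t2 ht2 t1 ht1 htne.symm hteq.symm (by omega)
  set c : ZMod p := (t1 : ZMod p) - (t2 : ZMod p) with hc
  have hcnat : c = ((t1 - t2 : ℕ) : ZMod p) := by
    rw [hc, Nat.cast_sub (le_of_lt hlt)]
  have hcne : c ≠ 0 := by
    rw [hcnat]
    intro h
    have hdvd := (ZMod.natCast_eq_zero_iff _ _).1 h
    have h1 : t1 - t2 ≤ k ^ k := by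
      have := Finset.mem_range.1 ht1
      omega
    have h2 : 0 < t1 - t2 := by omega
    have := Nat.le_of_dvd h2 hdvd
    omega
  set d : ZMod p → ℤ :=
    fun a => ((((t1 : ZMod p) * a).val : ℤ) - (((t2 : ZMod p) * a).val : ℤ)) with hd
  have hcast : ∀ a : ZMod p, ((d a : ℤ) : ZMod p) = c * a := by
    intro a
    rw [hd]
    push_cast
    rw [ZMod.natCast_val, ZMod.natCast_val, ZMod.cast_id, ZMod.cast_id, hc]
    ring
  have habs : ∀ a ∈ A, (k : ℤ) * |d a| ≤ (p : ℤ) - 1 := by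
    intro a ha
    have hbeq : ((t1 : ZMod p) * a).val * k / p = ((t2 : ZMod p) * a).val * k / p :=
      congrArg Fin.val (congrFun hteq ⟨a, ha⟩)
    set j := ((t1 : ZMod p) * a).val * k / p with hj
    have hub1 : ((t1 : ZMod p) * a).val * k < (j + 1) * p :=
      (Nat.div_lt_iff_lt_mul hppos).1 (Nat.lt_succ_self j)
    have hlb1 : j * p ≤ ((t1 : ZMod p) * a).val * k :=
      (Nat.le_div_iff_mul_le hppos).1 le_rfl
    have hub2 : ((t2 : ZMod p) * a).val * k < (j + 1) * p :=
      (Nat.div_lt_iff_lt_mul hppos).1 (by omega)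
    have hlb2 : j * p ≤ ((t2 : ZMod p) * a).val * k :=
      (Nat.le_div_iff_mul_le hppos).1 (by omega)
    have hub1' : (((t1 : ZMod p) * a).val : ℤ) * k < ((j : ℤ) + 1) * p := by
      exact_mod_cast hub1
    have hlb1' : (j : ℤ) * p ≤ (((t1 : ZMod p) * a).val : ℤ) * k := by exact_mod_cast hlb1
    have hub2' : (((t2 : ZMod p) * a).val : ℤ) * k < ((j : ℤ) + 1) * p := by
      exact_mod_cast hub2
    have hlb2' : (j : ℤ) * p ≤ (((t2 : ZMod p) * a).val : ℤ) * k := by exact_mod_cast hlb2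
    have habs' : |d a| * (k : ℤ) < p := by
      rcases abs_cases (d a) with ⟨h, _⟩ | ⟨h, _⟩ <;> rw [h, hd] <;> dsimp only <;> nlinarith
    have : (k : ℤ) * |d a| < p := by linarith [mul_comm (|d a|) (k : ℤ)]
    omega
  have hdne : ∀ a ∈ A, d a ≠ 0 := by
    intro a ha hda
    have h1 : ((d a : ℤ) : ZMod p) = 0 := by rw [hda]; exact Int.cast_zero
    rw [hcast a] at h1
    have ha0 : a ≠ 0 := fun h => h0 (h ▸ ha)
    exact ha0 (by
      rcases mul_eq_zero.1 h1 with h | h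
      · exact absurd h hcne
      · exact h)
  have hdinj : ∀ a ∈ A, ∀ b ∈ A, d a = d b → a = b := by
    intro a _ b _ hab
    have : ((d a : ℤ) : ZMod p) = ((d b : ℤ) : ZMod p) := by rw [hab]
    rw [hcast a, hcast b] at this
    exact mul_left_cancel₀ hcne this
  exact ⟨c, d, hcne, fun a _ => hcast a, hdne, hdinj, habs⟩

lemma log_lb {x : ℝ} (hx : 0 < x) : 1 - 1/x ≤ Real.log x := by
  have h := Real.log_le_sub_one_of_pos (show (0:ℝ) < x⁻¹ by positivity)
  rw [Real.log_inv] at h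
  rw [one_div]
  linarith

lemma exp2_lb : (7.38905609 : ℝ) < Real.exp 2 := by
  have h : (2.7182818283 : ℝ)^2 < (Real.exp 1)^2 := by
    apply pow_lt_pow_left₀ Real.exp_one_gt_d9 (by norm_num)
    norm_num
  rw [Real.exp_one_pow] at h
  norm_num at h
  linarith

lemma exp2_ub : Real.exp 2 < (7.3890561 : ℝ) := by
  have h : (Real.exp 1)^2 < (2.7182818286 : ℝ)^2 := by
    apply pow_lt_pow_left₀ Real.exp_one_lt_d9 (le_of_lt (Real.exp_pos 1))
    norm_num
  rw [Real.exp_one_pow] at h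
  norm_num at h
  linarith

lemma exp3_ub : Real.exp 3 < (20.0855370 : ℝ) := by
  have h : (Real.exp 1)^3 < (2.7182818286 : ℝ)^3 := by
    apply pow_lt_pow_left₀ Real.exp_one_lt_d9 (le_of_lt (Real.exp_pos 1))
    norm_num
  rw [Real.exp_one_pow] at h
  norm_num at h
  linarith

lemma loglog_pos {p : ℕ} (hp : 3 ≤ p) : 0 < Real.log (Real.log p) := by
  have hp1 : (1:ℝ) < Real.log p := by
    rw [Real.lt_log_iff_exp_lt (by positivity)]
    calc Real.exp 1 < 2.7182818286 := Real.exp_one_lt_d9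
    _ ≤ 3 := by norm_num
    _ ≤ (p:ℝ) := by exact_mod_cast hp
  exact Real.log_pos hp1

lemma ratio_lt_five {p : ℕ} (hp : p = 7 ∨ p = 11 ∨ p = 13) :
    Real.log p < 5 * Real.log (Real.log p) := by
  rcases hp with rfl | hp
  · -- p = 7 : log 7 ≤ 2 and log log 7 ≥ log 1.9 ≥ 0.9/1.9
    have hub : Real.log 7 ≤ 2 := by
      rw [Real.log_le_iff_le_exp (by norm_num)]
      linarith [exp2_lb]
    have hlb : (1.9 : ℝ) ≤ Real.log 7 := by
      rw [Real.le_log_iff_exp_le (by norm_num)]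
      have h1 : Real.exp (1.9 : ℝ) = Real.exp 2 / Real.exp 0.1 := by
        rw [← Real.exp_sub]; norm_num
      have h2 : (1.1 : ℝ) ≤ Real.exp 0.1 := by
        have := Real.add_one_le_exp (0.1 : ℝ); linarith
      rw [h1]
      rw [div_le_iff₀ (by positivity)]
      nlinarith [exp2_ub]
    have h3 : (0.9/1.9 : ℝ) ≤ Real.log (Real.log 7) := by
      calc (0.9/1.9 : ℝ) = 1 - 1/(1.9 : ℝ) := by norm_num
      _ ≤ Real.log (1.9 : ℝ) := log_lb (by norm_num)
      _ ≤ Real.log (Real.log 7) := Real.log_le_log (by norm_num) hlb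
    push_cast
    nlinarith
  · -- p = 11 or 13 : log p < 3 and log log p > log 2
    have hub : Real.log p < 3 := by
      rw [show (3:ℝ) = Real.log (Real.exp 3) from (Real.log_exp 3).symm]
      apply Real.log_lt_log (by rcases hp with rfl | rfl <;> norm_num)
      have : (p:ℝ) ≤ 13 := by rcases hp with rfl | rfl <;> norm_num
      calc (p:ℝ) ≤ 13 := this
      _ < 20 := by norm_num
      _ < Real.exp 3 := by
          have h : (2.7182818283 : ℝ)^3 < (Real.exp 1)^3 := by
            apply pow_lt_pow_left₀ Real.exp_one_gt_d9 (by norm_num)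
            norm_num
          rw [Real.exp_one_pow] at h
          nlinarith
    have hlb : Real.log 2 < Real.log (Real.log p) := by
      apply Real.log_lt_log (by norm_num)
      rw [Real.lt_log_iff_exp_lt (by rcases hp with rfl | rfl <;> norm_num)]
      calc Real.exp 2 < 7.3890561 := exp2_ub
      _ < (p:ℝ) := by rcases hp with rfl | rfl <;> norm_num
    have h2 := Real.log_two_gt_d9
    nlinarith

lemma one_le_loglog {p : ℕ} (hp : 17 ≤ p) : 1 ≤ Real.log (Real.log p) := by
  have hexpe : Real.exp (Real.exp 1) ≤ 17 := by
    calc Real.exp (Real.exp 1) ≤ Real.exp 2.7182818286 :=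
          Real.exp_le_exp.2 (le_of_lt Real.exp_one_lt_d9)
    _ = Real.exp 3 / Real.exp 0.2817181714 := by rw [← Real.exp_sub]; norm_num
    _ ≤ 20.0855370 / 1.2817181714 := by
        apply div_le_div₀ (by norm_num) (le_of_lt exp3_ub) (by norm_num)
        have := Real.add_one_le_exp (0.2817181714 : ℝ)
        linarith
    _ ≤ 17 := by norm_num
  have h1 : Real.exp 1 ≤ Real.log p := by
    rw [Real.le_log_iff_exp_le (by positivity)]
    calc Real.exp (Real.exp 1) ≤ 17 := hexpe
    _ ≤ (p:ℝ) := by exact_mod_cast hp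
  calc (1:ℝ) = Real.log (Real.exp 1) := (Real.log_exp 1).symm
  _ ≤ Real.log (Real.log p) := Real.log_le_log (Real.exp_pos 1) h1

lemma kk_le {p k : ℕ} (hp : 17 ≤ p) (hk : 1 ≤ k)
    (hsize : (k : ℝ) ≤ Real.log p / Real.log (Real.log p)) : k ^ k ≤ p := by
  have hx1 : (1:ℝ) ≤ Real.log (Real.log p) := one_le_loglog hp
  have hxpos : (0:ℝ) < Real.log (Real.log p) := by linarith
  have hmul : (k : ℝ) * Real.log (Real.log p) ≤ Real.log p := by
    rw [div_eq_mul_inv] at hsize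
    calc (k : ℝ) * Real.log (Real.log p)
        ≤ (Real.log p * (Real.log (Real.log p))⁻¹) * Real.log (Real.log p) := by
          apply mul_le_mul_of_nonneg_right hsize (le_of_lt hxpos)
    _ = Real.log p := by field_simp
  have hklex : (k : ℝ) ≤ Real.log p := by
    calc (k:ℝ) = (k:ℝ) * 1 := (mul_one _).symm
    _ ≤ (k : ℝ) * Real.log (Real.log p) := by
        apply mul_le_mul_of_nonneg_left hx1 (by positivity)
    _ ≤ Real.log p := hmul
  have hkpos : (0:ℝ) < (k:ℝ) := by exact_mod_cast hk
  have hlogk : Real.log k ≤ Real.log (Real.log p) := Real.log_le_log hkpos hklex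
  have hfin : Real.log ((k:ℝ) ^ k) ≤ Real.log p := by
    rw [Real.log_pow]
    calc (k:ℝ) * Real.log k ≤ (k:ℝ) * Real.log (Real.log p) :=
          mul_le_mul_of_nonneg_left hlogk (le_of_lt hkpos)
    _ ≤ Real.log p := hmul
  have hppos : (0:ℝ) < (p:ℝ) := by
    have : 0 < p := by omega
    exact_mod_cast this
  have := (Real.log_le_log_iff (by positivity) hppos).1 hfin
  exact_mod_cast this

end GrahamAux

theorem graham_small_sets (p : ℕ) (hp : p.Prime) (A : Finset (ZMod p)) (hA : (0 : ZMod p) ∉ A)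
    (hsize : (A.card : ℝ) ≤ Real.log p / Real.log (Real.log p)) :
    ∃ l : List (ZMod p), IsOrderingOf l A ∧ ValidOrdering l := by
  by_cases hsmall : A.card ≤ 4
  · exact GrahamAux.small_case A hA hsmall
  push_neg at hsmall
  haveI : Fact p.Prime := ⟨hp⟩
  set k := A.card with hk
  have hk5 : 5 ≤ k := hsmall
  have hkp : k + 1 ≤ p := by
    have hsub : A ⊆ Finset.univ.erase 0 := fun a ha =>
      Finset.mem_erase.2 ⟨fun h => hA (h ▸ ha), Finset.mem_univ a⟩
    have hcard := Finset.card_le_card hsub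
    rw [Finset.card_erase_of_mem (Finset.mem_univ 0), Finset.card_univ, ZMod.card] at hcard
    have := hp.two_le
    omega
  have hp17 : 17 ≤ p := by
    by_contra h
    push_neg at h
    have hp6 : 6 ≤ p := by omega
    have hmem : p = 7 ∨ p = 11 ∨ p = 13 := GrahamAux.prime_mid p hp hp6 h
    have h5 := GrahamAux.ratio_lt_five hmem
    have hpos := GrahamAux.loglog_pos (by omega : 3 ≤ p)
    have hklt : (k : ℝ) < 5 := by
      calc (k:ℝ) ≤ Real.log p / Real.log (Real.log p) := hsize
      _ < 5 := by rw [div_lt_iff₀ hpos]; linarith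
    have : k < 5 := by exact_mod_cast hklt
    omega
  have hkkle : k ^ k ≤ p := GrahamAux.kk_le hp17 (by omega) hsize
  have hkkne : k ^ k ≠ p := by
    intro h
    have hdvd : k ∣ p := by
      rw [← h]; exact dvd_pow_self k (by omega)
    rcases (Nat.Prime.eq_one_or_self_of_dvd hp k hdvd) with h1 | h1
    · omega
    · rw [h1] at h
      have hlt : p < p ^ p := Nat.lt_pow_self (by omega : 1 < p)
      omega
  have hkk : k ^ k < p := lt_of_le_of_ne hkkle hkkne
  obtain ⟨c, d, hc, hcast, hdne, hdinj, habs⟩ :=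
    GrahamAux.rectify p hp A hA k rfl (by omega) hkk
  set B := A.image d with hB
  have h0B : (0:ℤ) ∉ B := by
    rw [hB]
    intro h
    obtain ⟨a, ha, h⟩ := Finset.mem_image.1 h
    exact hdne a ha h
  obtain ⟨L, hLnd, hLmem, hLpnd⟩ := GrahamAux.lemmaR B h0B
  have hmemB : ∀ x ∈ L, x ∈ B := fun x hx => (hLmem x).1 hx
  have hppos : (0:ℤ) < (p:ℤ) := by exact_mod_cast hp.pos
  have hkposZ : (0:ℤ) < (k:ℤ) := by exact_mod_cast (by omega : 0 < k)
  have habsL : (L.map (fun x => |x|)).sum ≤ (p:ℤ) - 1 := by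
    have hts : L.toFinset = B := by
      ext x
      rw [List.mem_toFinset]
      exact hLmem x
    have h1 : (L.map (fun x => |x|)).sum = ∑ b ∈ B, |b| := by
      rw [← hts, List.sum_toFinset _ hLnd]
    rw [h1, hB, Finset.sum_image (fun a ha b hb h => hdinj a ha b hb h)]
    have h2 : (k:ℤ) * ∑ a ∈ A, |d a| ≤ (k:ℤ) * ((p:ℤ) - 1) := by
      rw [Finset.mul_sum]
      calc ∑ a ∈ A, (k:ℤ) * |d a| ≤ ∑ _a ∈ A, ((p:ℤ) - 1) := Finset.sum_le_sum habs
      _ = (k:ℤ) * ((p:ℤ)-1) := by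
          rw [Finset.sum_const, ← hk]
          push_cast
          ring
    exact le_of_mul_le_mul_left h2 hkposZ
  set g : ℤ → ZMod p := fun n => c⁻¹ * (n : ZMod p) with hg
  have hgadd : ∀ x y : ℤ, g (x+y) = g x + g y := by
    intro x y
    rw [hg]
    push_cast
    ring
  have hcast_inj : ∀ x y : ℤ, g x = g y → |x - y| ≤ (p:ℤ) - 1 → x = y := by
    intro x y hgxy hb
    have h1 : ((x : ℤ) : ZMod p) = ((y : ℤ) : ZMod p) :=
      mul_left_cancel₀ (inv_ne_zero hc) hgxy
    have h2 : ((x - y : ℤ) : ZMod p) = 0 := by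
      push_cast
      rw [sub_eq_zero]
      exact h1
    have h3 := (ZMod.intCast_zmod_eq_zero_iff_dvd _ _).1 h2
    have h4 : x - y = 0 := Int.eq_zero_of_abs_lt_dvd h3 (by omega)
    linarith
  have hgd : ∀ a ∈ A, g (d a) = a := by
    intro a ha
    rw [hg]
    dsimp only
    rw [hcast a ha, ← mul_assoc, inv_mul_cancel₀ hc, one_mul]
  have hBbound : ∀ x ∈ B, (k:ℤ) * |x| ≤ (p:ℤ) - 1 := by
    intro x hx
    rw [hB] at hx
    obtain ⟨a, ha, rfl⟩ := Finset.mem_image.1 hx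
    exact habs a ha
  have hLinj : ∀ x ∈ L, ∀ y ∈ L, g x = g y → x = y := by
    intro x hx y hy hgxy
    apply hcast_inj x y hgxy
    have hx' := hBbound x (hmemB x hx)
    have hy' := hBbound y (hmemB y hy)
    have htri : |x - y| ≤ |x| + |y| := abs_sub _ _
    have h5 : (k:ℤ) * |x - y| ≤ 2 * ((p:ℤ) - 1) := by nlinarith
    nlinarith [abs_nonneg (x - y)]
  refine ⟨L.map g, ⟨List.Nodup.map_on hLinj hLnd, ?_⟩, ?_⟩
  · intro a
    simp only [List.mem_map]
    constructor
    · rintro ⟨x, hx, rfl⟩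
      have hxB := hmemB x hx
      rw [hB] at hxB
      obtain ⟨a0, ha0, rfl⟩ := Finset.mem_image.1 hxB
      rw [hgd a0 ha0]
      exact ha0
    · intro ha
      exact ⟨d a, (hLmem (d a)).2 (by rw [hB]; exact Finset.mem_image_of_mem d ha),
        hgd a ha⟩
  · rw [GrahamAux.validOrdering_iff, GrahamAux.psl_map g hgadd]
    apply List.Nodup.map_on ?_ hLpnd
    intro x hx y hy hgxy
    exact hcast_inj x y hgxy (le_trans (GrahamAux.psl_diff_bound hx hy) habsL)
end

section
/- Every finite subset A of Z \ {0} has a valid ordering a_1,...,a_n whose reverse a_n,...,a_1 is also valid. -/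
private lemma list_sum_pos' {l : List ℤ} (h : ∀ a ∈ l, 0 < a) (hne : l ≠ []) : 0 < l.sum := by
  induction l with
  | nil => simp at hne
  | cons x t ih =>
    simp only [List.sum_cons]
    have hx := h x List.mem_cons_self
    by_cases ht : t = []
    · subst ht; simpa using hx
    · have := ih (fun a ha => h a (List.mem_cons_of_mem _ ha)) ht
      linarith

private lemma list_sum_nonneg' {l : List ℤ} (h : ∀ a ∈ l, 0 < a) : 0 ≤ l.sum := by
  by_cases hne : l = []
  · subst hne; simp
  · exact le_of_lt (list_sum_pos' h hne)

private lemma sum_take_lt {l : List ℤ} (hpos : ∀ a ∈ l, 0 < a) {i j : ℕ}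
    (hij : i < j) (hj : j ≤ l.length) : (l.take i).sum < (l.take j).sum := by
  have h1 : l.take j = l.take i ++ (l.drop i).take (j - i) := by
    rw [← List.take_add]; congr 1; omega
  rw [h1, List.sum_append]
  have hlen : ((l.drop i).take (j - i)).length = min (j - i) (l.length - i) := by
    simp [List.length_take, List.length_drop]
  have hne : ((l.drop i).take (j - i)) ≠ [] := by
    intro h; rw [h] at hlen; simp at hlen; omega
  have hp : 0 < ((l.drop i).take (j - i)).sum := by
    apply list_sum_pos' ?_ hne
    intro a ha
    exact hpos a (List.mem_of_mem_drop (List.mem_of_mem_take ha))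
  linarith

private lemma sum_take_le {l : List ℤ} (hpos : ∀ a ∈ l, 0 < a) (m : ℕ) :
    (l.take m).sum ≤ l.sum := by
  have h := List.sum_take_add_sum_drop l m
  have h2 : 0 ≤ (l.drop m).sum :=
    list_sum_nonneg' (fun a ha => hpos a (List.mem_of_mem_drop ha))
  linarith

private lemma ord_sum {l : List ℤ} {A : Finset ℤ} (h : IsOrderingOf l A) :
    l.sum = ∑ a ∈ A, a := by
  classical
  have hperm : List.Perm l A.toList :=
    (List.perm_ext_iff_of_nodup h.1 A.nodup_toList).mpr
      (fun a => by rw [h.2 a, Finset.mem_toList])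
  rw [hperm.sum_eq]
  rw [Finset.sum_eq_multiset_sum]
  simp [Finset.toList]

private lemma ord_toList (A : Finset ℤ) : IsOrderingOf A.toList A :=
  ⟨A.nodup_toList, fun a => Finset.mem_toList⟩

private lemma lemF : ∀ N : ℕ, ∀ X Y : Finset ℤ, X.card + Y.card ≤ N →
    (∀ x ∈ X, 0 < x) → (∀ y ∈ Y, 0 < y) → (∑ a ∈ X, a) ≠ (∑ a ∈ Y, a) →
    ∃ lx ly : List ℤ, IsOrderingOf lx X ∧ IsOrderingOf ly Y ∧
      ∀ t m : ℕ, 1 ≤ t → t ≤ lx.length → 1 ≤ m → m ≤ ly.length →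
        (lx.take t).sum ≠ (ly.take m).sum := by
  intro N
  induction N with
  | zero =>
    intro X Y hcard hX hY hne
    have h1 : X = ∅ := by rw [← Finset.card_eq_zero]; omega
    have h2 : Y = ∅ := by rw [← Finset.card_eq_zero]; omega
    subst h1; subst h2; simp at hne
  | succ n ih =>
    have key : ∀ X Y : Finset ℤ, X.card + Y.card ≤ n + 1 →
        (∀ x ∈ X, 0 < x) → (∀ y ∈ Y, 0 < y) → (∑ a ∈ Y, a) < (∑ a ∈ X, a) →
        ∃ lx ly : List ℤ, IsOrderingOf lx X ∧ IsOrderingOf ly Y ∧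
          ∀ t m : ℕ, 1 ≤ t → t ≤ lx.length → 1 ≤ m → m ≤ ly.length →
            (lx.take t).sum ≠ (ly.take m).sum := by
      intro X Y hcard hX hY hlt
      by_cases hYe : Y = ∅
      · subst hYe
        refine ⟨X.toList, [], ord_toList X, ⟨List.nodup_nil, by simp⟩, ?_⟩
        intro t m _ _ hm1 hm2
        simp at hm2; omega
      · have hYne : Y.Nonempty := Finset.nonempty_iff_ne_empty.mpr hYe
        have hYpos : 0 < ∑ a ∈ Y, a := Finset.sum_pos (fun i hi => hY i hi) hYne
        have hXpos : 0 < ∑ a ∈ X, a := lt_trans hYpos hlt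
        have hXne : X.Nonempty := by
          rcases Finset.eq_empty_or_nonempty X with h | h
          · subst h; simp at hXpos
          · exact h
        have hx : ∃ x ∈ X, (∑ a ∈ X, a) - x ≠ ∑ a ∈ Y, a := by
          by_contra hcon
          push_neg at hcon
          obtain ⟨x0, hx0⟩ := hXne
          have hall : ∀ x ∈ X, x = (∑ a ∈ X, a) - ∑ a ∈ Y, a := by
            intro x hxm
            have := hcon x hxm
            omega
          have hXsub : X = {(∑ a ∈ X, a) - ∑ a ∈ Y, a} := by
            apply Finset.eq_singleton_iff_unique_mem.mpr
            constructor
            · have := hall x0 hx0; rwa [← this]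
            · exact hall
          have : (∑ a ∈ X, a) = (∑ a ∈ X, a) - ∑ a ∈ Y, a := by
            conv_lhs => rw [hXsub]
            simp
          omega
        obtain ⟨x, hxX, hxne⟩ := hx
        have hsum' : (∑ a ∈ X.erase x, a) = (∑ a ∈ X, a) - x :=
          Finset.sum_erase_eq_sub hxX
        have hcard' : (X.erase x).card + Y.card ≤ n := by
          have h1 := Finset.card_erase_of_mem hxX
          have h2 : 1 ≤ X.card := Finset.card_pos.mpr hXne
          omega
        obtain ⟨lx', ly, hOx', hOy, hdisj⟩ :=
          ih (X.erase x) Y hcard'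
            (fun a ha => hX a (Finset.mem_of_mem_erase ha)) hY (by omega)
        have hxnot : x ∉ lx' := by
          intro hmem
          exact Finset.notMem_erase x X ((hOx'.2 x).1 hmem)
        have hlxsum : lx'.sum = (∑ a ∈ X, a) - x := by rw [ord_sum hOx', hsum']
        have hlysum : ly.sum = ∑ a ∈ Y, a := ord_sum hOy
        have hlypos : ∀ a ∈ ly, 0 < a := fun a ha => hY a ((hOy.2 a).1 ha)
        refine ⟨lx' ++ [x], ly, ⟨?_, ?_⟩, hOy, ?_⟩
        · refine List.Nodup.append hOx'.1 (List.nodup_singleton x) ?_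
          intro a ha hb
          simp at hb; subst hb
          exact hxnot ha
        · intro a
          simp only [List.mem_append, List.mem_singleton, hOx'.2 a, Finset.mem_erase]
          constructor
          · rintro (⟨_, h⟩ | rfl)
            · exact h
            · exact hxX
          · intro haX
            by_cases hax : a = x
            · right; exact hax
            · left; exact ⟨hax, haX⟩
        · intro t m ht1 ht2 hm1 hm2
          have hlen : (lx' ++ [x]).length = lx'.length + 1 := by simp
          by_cases htle : t ≤ lx'.length
          · rw [List.take_append_of_le_length htle]
            exact hdisj t m ht1 htle hm1 hm2
          · have hteq : t = lx'.length + 1 := by omega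
            have : (lx' ++ [x]).take t = lx' ++ [x] := by
              apply List.take_of_length_le; omega
            rw [this, List.sum_append]
            have h1 : (ly.take m).sum ≤ ly.sum := sum_take_le hlypos m
            simp only [List.sum_singleton]
            intro hcontra
            rw [hlxsum] at hcontra
            omega
    intro X Y hcard hX hY hne
    rcases lt_trichotomy (∑ a ∈ X, a) (∑ a ∈ Y, a) with h | h | h
    · obtain ⟨ly, lx, hOy, hOx, hd⟩ := key Y X (by omega) hY hX h
      exact ⟨lx, ly, hOx, hOy, fun t m h1 h2 h3 h4 => (hd m t h3 h4 h1 h2).symm⟩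
    · exact absurd h hne
    · exact key X Y hcard hX hY h

private lemma coreF (X Y : Finset ℤ) (hX : ∀ x ∈ X, 0 < x) (hY : ∀ y ∈ Y, 0 < y) :
    ∃ lx ly : List ℤ, IsOrderingOf lx X ∧ IsOrderingOf ly Y ∧
      ∀ t m : ℕ, 1 ≤ t → t ≤ lx.length → 1 ≤ m → m ≤ ly.length →
        ¬(t = lx.length ∧ m = ly.length) →
        (lx.take t).sum ≠ (ly.take m).sum := by
  by_cases hne : (∑ a ∈ X, a) ≠ (∑ a ∈ Y, a)
  · obtain ⟨lx, ly, h1, h2, h3⟩ := lemF (X.card + Y.card) X Y le_rfl hX hY hne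
    exact ⟨lx, ly, h1, h2, fun t m a b c d _ => h3 t m a b c d⟩
  · push_neg at hne
    by_cases hXe : X = ∅
    · subst hXe
      refine ⟨[], Y.toList, ⟨List.nodup_nil, by simp⟩, ord_toList Y, ?_⟩
      intro t m ht1 ht2 _ _ _
      simp at ht2; omega
    · obtain ⟨x, hxX⟩ := Finset.nonempty_iff_ne_empty.mpr hXe
      have hxpos := hX x hxX
      have hsum' : (∑ a ∈ X.erase x, a) = (∑ a ∈ X, a) - x :=
        Finset.sum_erase_eq_sub hxX
      have hne' : (∑ a ∈ X.erase x, a) ≠ (∑ a ∈ Y, a) := by omega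
      obtain ⟨lx', ly, hOx', hOy, hdisj⟩ :=
        lemF ((X.erase x).card + Y.card) (X.erase x) Y le_rfl
          (fun a ha => hX a (Finset.mem_of_mem_erase ha)) hY hne'
      have hxnot : x ∉ lx' := by
        intro hmem
        exact Finset.notMem_erase x X ((hOx'.2 x).1 hmem)
      have hlxsum : lx'.sum = (∑ a ∈ X, a) - x := by rw [ord_sum hOx', hsum']
      have hlysum : ly.sum = ∑ a ∈ Y, a := ord_sum hOy
      have hlypos : ∀ a ∈ ly, 0 < a := fun a ha => hY a ((hOy.2 a).1 ha)
      refine ⟨lx' ++ [x], ly, ⟨?_, ?_⟩, hOy, ?_⟩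
      · refine List.Nodup.append hOx'.1 (List.nodup_singleton x) ?_
        intro a ha hb
        simp at hb; subst hb
        exact hxnot ha
      · intro a
        simp only [List.mem_append, List.mem_singleton, hOx'.2 a, Finset.mem_erase]
        constructor
        · rintro (⟨_, h⟩ | rfl)
          · exact h
          · exact hxX
        · intro haX
          by_cases hax : a = x
          · right; exact hax
          · left; exact ⟨hax, haX⟩
      · intro t m ht1 ht2 hm1 hm2 hnotend
        have hlen : (lx' ++ [x]).length = lx'.length + 1 := by simp
        by_cases htle : t ≤ lx'.length
        · rw [List.take_append_of_le_length htle]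
          exact hdisj t m ht1 htle hm1 hm2
        · have hteq : t = lx'.length + 1 := by omega
          have hmlt : m < ly.length := by
            rcases Nat.lt_or_ge m ly.length with h | h
            · exact h
            · exfalso; apply hnotend; constructor <;> omega
          have : (lx' ++ [x]).take t = lx' ++ [x] := by
            apply List.take_of_length_le; omega
          rw [this, List.sum_append]
          have h1 : (ly.take m).sum < ly.sum := by
            have := sum_take_lt hlypos hmlt le_rfl
            rwa [List.take_of_length_le le_rfl] at this
          simp only [List.sum_singleton]
          intro hcontra
          rw [hlxsum] at hcontra
          omega

private lemma sum_map_neg'' (l : List ℤ) : (l.map (fun a => -a)).sum = -l.sum := by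
  induction l with
  | nil => simp
  | cons x t ih => simp [ih]; ring

theorem graham_integers_two_sided (A : Finset ℤ) (hA : (0 : ℤ) ∉ A) :
    ∃ l : List ℤ, IsOrderingOf l A ∧ ValidOrdering l ∧ ValidOrdering l.reverse := by
  classical
  set X := A.filter (fun a => 0 < a) with hXdef
  set Yneg := A.filter (fun a => a < 0) with hYnegdef
  set Y := Yneg.image (fun a => -a) with hYdef
  have hXpos : ∀ x ∈ X, 0 < x := fun x hx => (Finset.mem_filter.mp hx).2
  have hYpos : ∀ y ∈ Y, 0 < y := by
    intro y hy
    rw [hYdef, Finset.mem_image] at hy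
    obtain ⟨b, hb, rfl⟩ := hy
    have := (Finset.mem_filter.mp hb).2
    linarith
  obtain ⟨lx, ly, hOx, hOy, hdisj⟩ := coreF X Y hXpos hYpos
  set ν := ((ly.map (fun a => -a)).reverse : List ℤ) with hνdef
  set l := ν ++ lx with hldef
  set q := ly.length with hq
  set r := lx.length with hr
  have hνlen : ν.length = q := by simp [hνdef, hq]
  have hllen : l.length = q + r := by simp [hldef, hνdef, hq, hr]
  have hlxpos : ∀ a ∈ lx, 0 < a := fun a ha => hXpos a ((hOx.2 a).1 ha)
  have hlypos : ∀ a ∈ ly, 0 < a := fun a ha => hYpos a ((hOy.2 a).1 ha)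
  set T := ly.sum with hT
  have hνsum : ν.sum = -T := by
    rw [hνdef, List.sum_reverse, sum_map_neg'']
  -- formula for prefix sums in the negative part
  have hg1 : ∀ i, i ≤ q → (l.take i).sum = (ly.take (q - i)).sum - T := by
    intro i hi
    rw [hldef, List.take_append_of_le_length (by rw [hνlen]; exact hi)]
    have h1 : ν.take i = ((ly.map (fun a => -a)).drop (q - i)).reverse := by
      rw [hνdef, List.reverse_drop]
      have hlen2 : (ly.map (fun a : ℤ => -a)).length = q := by simp [hq]
      congr 1
      omega
    rw [h1, List.sum_reverse, ← List.map_drop, sum_map_neg'']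
    have h2 := List.sum_take_add_sum_drop ly (q - i)
    rw [hT]
    omega
  -- formula for prefix sums in the positive part
  have hg2 : ∀ k, q ≤ k → (l.take k).sum = (lx.take (k - q)).sum - T := by
    intro k hk
    rw [hldef, List.take_append]
    rw [List.take_of_length_le (by rw [hνlen]; exact hk), hνlen]
    rw [List.sum_append, hνsum]
    omega
  -- the main injectivity property
  have hinj : ∀ i j, i < j → j ≤ q + r → (l.take i).sum = (l.take j).sum →
      i = 0 ∧ j = q + r := by
    intro i j hij hj heq
    by_cases hjq : j ≤ q
    · exfalso
      rw [hg1 i (le_trans (le_of_lt hij) hjq), hg1 j hjq] at heq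
      have hlt : (ly.take (q - j)).sum < (ly.take (q - i)).sum :=
        sum_take_lt hlypos (by omega) (by omega)
      omega
    · by_cases hiq : q ≤ i
      · exfalso
        rw [hg2 i hiq, hg2 j (by omega)] at heq
        have hlt : (lx.take (i - q)).sum < (lx.take (j - q)).sum :=
          sum_take_lt hlxpos (by omega) (by omega)
        omega
      · -- i < q < j
        have h1 := hg1 i (by omega)
        have h2 := hg2 j (by omega)
        rw [h1, h2] at heq
        have heq' : (lx.take (j - q)).sum = (ly.take (q - i)).sum := by omega
        by_cases hend : j - q = r ∧ q - i = q
        · omega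
        · exact absurd heq'
            (hdisj (j - q) (q - i) (by omega) (by omega) (by omega) (by omega) hend)
  have hval : ValidOrdering l := by
    unfold ValidOrdering
    apply List.Nodup.map_on ?_ List.nodup_range
    intro a ha b hb hfeq
    rw [List.mem_range] at ha hb
    by_contra hne
    rcases Nat.lt_or_ge a b with h | h
    · have := hinj (a + 1) (b + 1) (by omega) (by omega) hfeq
      omega
    · have hba : b < a := by omega
      have := hinj (b + 1) (a + 1) (by omega) (by omega) hfeq.symm
      omega
  have hrev : ValidOrdering l.reverse := by
    unfold ValidOrdering
    apply List.Nodup.map_on ?_ List.nodup_range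
    intro a ha b hb hfeq
    rw [List.mem_range, List.length_reverse] at ha hb
    have key : ∀ k, k < l.length →
        (l.reverse.take (k + 1)).sum = l.sum - (l.take (l.length - (k + 1))).sum := by
      intro k hk
      have h1 : l.reverse.take (k + 1) = (l.drop (l.length - (k + 1))).reverse := by
        rw [List.reverse_drop]
        congr 1
        omega
      rw [h1, List.sum_reverse]
      have := List.sum_take_add_sum_drop l (l.length - (k + 1))
      omega
    rw [key a ha, key b hb] at hfeq
    by_contra hne
    have heq2 : (l.take (l.length - (a + 1))).sum = (l.take (l.length - (b + 1))).sum := by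
      omega
    rcases Nat.lt_trichotomy a b with h | h | h
    · have := hinj (l.length - (b + 1)) (l.length - (a + 1)) (by omega) (by omega) heq2.symm
      omega
    · exact hne h
    · have := hinj (l.length - (a + 1)) (l.length - (b + 1)) (by omega) (by omega) heq2
      omega
  have hord : IsOrderingOf l A := by
    constructor
    · rw [hldef]
      apply List.Nodup.append
      · rw [hνdef, List.nodup_reverse]
        exact hOy.1.map (fun a b h => by omega)
      · exact hOx.1
      · intro a ha hb
        have ha' : a < 0 := by
          rw [hνdef, List.mem_reverse, List.mem_map] at ha
          obtain ⟨b, hbly, rfl⟩ := ha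
          have := hlypos b hbly
          omega
        have hb' : 0 < a := hlxpos a hb
        omega
    · intro a
      rw [hldef, List.mem_append]
      constructor
      · rintro (ha | ha)
        · rw [hνdef, List.mem_reverse, List.mem_map] at ha
          obtain ⟨b, hbly, rfl⟩ := ha
          have hbY := (hOy.2 b).1 hbly
          rw [hYdef, Finset.mem_image] at hbY
          obtain ⟨c, hc, rfl⟩ := hbY
          simp only [neg_neg]
          exact (Finset.mem_filter.mp hc).1
        · exact (Finset.mem_filter.mp ((hOx.2 a).1 ha)).1
      · intro haA
        have hane : a ≠ 0 := fun h => hA (h ▸ haA)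
        rcases lt_or_gt_of_ne hane with hneg | hpos
        · left
          rw [hνdef, List.mem_reverse, List.mem_map]
          refine ⟨-a, ?_, by ring⟩
          apply (hOy.2 (-a)).2
          rw [hYdef]
          exact Finset.mem_image_of_mem _ (Finset.mem_filter.mpr ⟨haA, hneg⟩)
        · right
          exact (hOx.2 a).2 (Finset.mem_filter.mpr ⟨haA, hpos⟩)
  exact ⟨l, hord, hval, hrev⟩
end
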